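/- arXiv:1709.02582 — 2 statements merged into one kernel-verified Lean document; each statement's English description precedes it below -/
import Mathlib

section
/- Suppose for each frame r, the J-slot Lyapunov drift satisfies Δ_J(rJ) = (1/2)q((r+1)J+1)² (queue reset to 0 at frame start) and Δ_J(rJ) ≤ U·J² + V_r·J·g_r, and the queue satisfies ∑_{m=rJ+1}^{(r+1)J} y(m) ≤ q((r+1)J+1). Then with y(m) = e(m) - αB/M and M = RJ, the total energy consumption satisfies ∑_{m=1}^{M} e(m) ≤ αB + ∑_{r=0}^{R-1} √(2UJ² + 2V_r·J·g_r). -/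
lemma frame_split (J : ℕ) (f : ℕ → ℝ) :
    ∀ n : ℕ, ∑ m ∈ Finset.Ioc 0 (n * J), f m
      = ∑ r ∈ Finset.range n, ∑ m ∈ Finset.Ioc (r * J) ((r + 1) * J), f m := by
  intro n
  induction n with
  | zero => simp
  | succ n ih =>
    rw [Finset.sum_range_succ, ← ih,
      Finset.sum_Ioc_consecutive f (Nat.zero_le (n * J))
        (Nat.mul_le_mul_right J (Nat.le_succ n))]

theorem stmt6 (R J : ℕ) (hR : 1 ≤ R) (hJ : 1 ≤ J)
    (q e g V : ℕ → ℝ) (U α B : ℝ)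
    (hU : 0 ≤ U) (hV : ∀ r < R, 0 < V r) (hg : ∀ r < R, 0 ≤ g r)
    (hq : ∀ m, 0 ≤ q m)
    -- queue reset at the start of each frame, so the J-slot drift of frame r equals
    -- (1/2) q((r+1)J+1)^2, which is bounded by U J^2 + V_r J g_r
    (hdrift : ∀ r < R,
      (1 / 2) * q ((r + 1) * J + 1) ^ 2 ≤ U * (J : ℝ) ^ 2 + V r * (J : ℝ) * g r)
    -- queue bound on the accumulated energy deviation y(m) = e(m) - αB/(RJ)
    (hy : ∀ r < R,
      ∑ m ∈ Finset.Icc (r * J + 1) ((r + 1) * J), (e m - α * B / ((R : ℝ) * (J : ℝ)))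
        ≤ q ((r + 1) * J + 1)) :
    ∑ m ∈ Finset.Icc 1 (R * J), e m
      ≤ α * B + ∑ r ∈ Finset.range R,
          Real.sqrt (2 * U * (J : ℝ) ^ 2 + 2 * V r * (J : ℝ) * g r) := by
  set c : ℝ := α * B / ((R : ℝ) * (J : ℝ)) with hc
  have hR0 : (0 : ℝ) < (R : ℝ) := by exact_mod_cast hR
  have hJ0 : (0 : ℝ) < (J : ℝ) := by exact_mod_cast hJ
  have hRJ : ((R : ℝ) * (J : ℝ)) ≠ 0 := by positivity
  -- per-frame bound on the deviation sum
  have hframe : ∀ r < R,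
      ∑ m ∈ Finset.Ioc (r * J) ((r + 1) * J), (e m - c)
        ≤ Real.sqrt (2 * U * (J : ℝ) ^ 2 + 2 * V r * (J : ℝ) * g r) := by
    intro r hr
    have h1 := hy r hr
    have h2 := hdrift r hr
    have hq' := hq ((r + 1) * J + 1)
    have hIcc : Finset.Icc (r * J + 1) ((r + 1) * J) = Finset.Ioc (r * J) ((r + 1) * J) := by
      rw [← Finset.Icc_add_one_left_eq_Ioc]
    rw [hIcc] at h1
    have hqle : q ((r + 1) * J + 1)
        ≤ Real.sqrt (2 * U * (J : ℝ) ^ 2 + 2 * V r * (J : ℝ) * g r) := by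
      rw [show (2 : ℝ) * U * (J : ℝ) ^ 2 + 2 * V r * (J : ℝ) * g r
          = 2 * (U * (J : ℝ) ^ 2 + V r * (J : ℝ) * g r) by ring]
      calc q ((r + 1) * J + 1) = Real.sqrt (q ((r + 1) * J + 1) ^ 2) := by
            rw [Real.sqrt_sq hq']
        _ ≤ _ := by
            apply Real.sqrt_le_sqrt
            linarith
    calc _ ≤ q ((r + 1) * J + 1) := h1
      _ ≤ _ := hqle
  -- split total sum into frames
  have hsplit := frame_split J (fun m => e m - c) R
  have hIcc1 : Finset.Icc 1 (R * J) = Finset.Ioc 0 (R * J) := by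
    rw [← Finset.Icc_add_one_left_eq_Ioc, zero_add]
  have hdev : ∑ m ∈ Finset.Icc 1 (R * J), (e m - c)
      ≤ ∑ r ∈ Finset.range R,
          Real.sqrt (2 * U * (J : ℝ) ^ 2 + 2 * V r * (J : ℝ) * g r) := by
    rw [hIcc1, hsplit]
    exact Finset.sum_le_sum fun r hr => hframe r (Finset.mem_range.mp hr)
  have hcard : ((Finset.Icc 1 (R * J)).card : ℝ) = (R : ℝ) * (J : ℝ) := by
    rw [Nat.card_Icc]
    push_cast
    ring
  have hsum : ∑ m ∈ Finset.Icc 1 (R * J), (e m - c)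
      = (∑ m ∈ Finset.Icc 1 (R * J), e m) - α * B := by
    rw [Finset.sum_sub_distrib, Finset.sum_const, nsmul_eq_mul, hcard, hc,
      mul_div_cancel₀ _ hRJ]
  rw [hsum] at hdev
  linarith
end

section
/- Suppose the frame drift bound Δ_J(rJ) ≤ UJ² + V_r·J·g_r + W·J holds with Δ_J(rJ) = (1/2)q((r+1)J+1)² (queue reset each frame), and ∑_{m=rJ+1}^{(r+1)J} y(m) ≤ q((r+1)J+1) with y(m) = e_L(m) - αB/(RJ). Then total energy satisfies ∑_{m=1}^{RJ} e_L(m) ≤ αB + ∑_{r=0}^{R-1} √(2(UJ² + V_r·J·g_r + W·J)). -/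
theorem stmt16 (R J : ℕ) (hR : 1 ≤ R) (hJ : 1 ≤ J)
    (q eL g V : ℕ → ℝ) (U W α B : ℝ)
    (hU : 0 ≤ U) (hW : 0 ≤ W) (hV : ∀ r < R, 0 < V r) (hg : ∀ r < R, 0 ≤ g r)
    (hq : ∀ m, 0 ≤ q m) (heL : ∀ m, 0 ≤ eL m)
    -- queue reset each frame: the J-slot drift equals (1/2) q((r+1)J+1)^2 and is
    -- bounded by U J^2 + V_r J g_r + W J
    (hdrift : ∀ r < R,
      (1 / 2) * q ((r + 1) * J + 1) ^ 2
        ≤ U * (J : ℝ) ^ 2 + V r * (J : ℝ) * g r + W * (J : ℝ))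
    -- accumulated energy deviation y(m) = e_L(m) - αB/(RJ) is bounded by the queue
    (hy : ∀ r < R,
      ∑ m ∈ Finset.Icc (r * J + 1) ((r + 1) * J), (eL m - α * B / ((R : ℝ) * (J : ℝ)))
        ≤ q ((r + 1) * J + 1)) :
    ∑ m ∈ Finset.Icc 1 (R * J), eL m
      ≤ α * B + ∑ r ∈ Finset.range R,
          Real.sqrt (2 * (U * (J : ℝ) ^ 2 + V r * (J : ℝ) * g r + W * (J : ℝ))) := by
  set c : ℝ := α * B / ((R : ℝ) * (J : ℝ)) with hc
  have hRpos : (0:ℝ) < R := by exact_mod_cast hR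
  have hJpos : (0:ℝ) < J := by exact_mod_cast hJ
  -- partition of Icc 1 (R*J) into frames
  have hpart : ∀ n : ℕ, ∑ m ∈ Finset.Ioc 0 (n * J), eL m
      = ∑ r ∈ Finset.range n, ∑ m ∈ Finset.Ioc (r * J) ((r + 1) * J), eL m := by
    intro n
    induction n with
    | zero => simp
    | succ n ih =>
      rw [Finset.sum_range_succ, ← ih,
        Finset.sum_Ioc_consecutive eL (Nat.zero_le _)
          (Nat.mul_le_mul_right J (Nat.le_succ n))]
  have key : ∀ r < R, ∑ m ∈ Finset.Ioc (r * J) ((r + 1) * J), eL m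
      ≤ (J : ℝ) * c
        + Real.sqrt (2 * (U * (J : ℝ) ^ 2 + V r * (J : ℝ) * g r + W * (J : ℝ))) := by
    intro r hr
    have hqb : q ((r + 1) * J + 1)
        ≤ Real.sqrt (2 * (U * (J : ℝ) ^ 2 + V r * (J : ℝ) * g r + W * (J : ℝ))) := by
      rw [Real.le_sqrt (hq _)] <;>
        nlinarith [hdrift r hr, sq_nonneg (q ((r + 1) * J + 1))]
    have hIcc : Finset.Icc (r * J + 1) ((r + 1) * J) = Finset.Ioc (r * J) ((r + 1) * J) := by
      rw [Finset.Icc_add_one_left_eq_Ioc]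
    have hsum := hy r hr
    rw [hIcc, Finset.sum_sub_distrib, Finset.sum_const, Nat.card_Ioc] at hsum
    have hcard : ((r + 1) * J - r * J : ℕ) = J := by
      rw [add_mul, one_mul, Nat.add_sub_cancel_left]
    rw [hcard, nsmul_eq_mul] at hsum
    linarith [hqb, hsum]
  have h1 : Finset.Icc 1 (R * J) = Finset.Ioc 0 (R * J) := by rw [show (1:ℕ) = 0 + 1 from rfl, Finset.Icc_add_one_left_eq_Ioc]
  rw [h1, hpart R]
  calc ∑ r ∈ Finset.range R, ∑ m ∈ Finset.Ioc (r * J) ((r + 1) * J), eL m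
      ≤ ∑ r ∈ Finset.range R, ((J : ℝ) * c
          + Real.sqrt (2 * (U * (J : ℝ) ^ 2 + V r * (J : ℝ) * g r + W * (J : ℝ)))) := by
        apply Finset.sum_le_sum
        intro r hr
        exact key r (Finset.mem_range.mp hr)
    _ = (R : ℝ) * ((J : ℝ) * c)
          + ∑ r ∈ Finset.range R,
            Real.sqrt (2 * (U * (J : ℝ) ^ 2 + V r * (J : ℝ) * g r + W * (J : ℝ))) := by
        rw [Finset.sum_add_distrib, Finset.sum_const, Finset.card_range, nsmul_eq_mul]
    _ = α * B + ∑ r ∈ Finset.range R,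
            Real.sqrt (2 * (U * (J : ℝ) ^ 2 + V r * (J : ℝ) * g r + W * (J : ℝ))) := by
        congr 1
        field_simp [hc]
        rw [hc]; field_simp [hRpos.ne', hJpos.ne']
end
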